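/- If the block matrix inequality (13b) of Theorem 1 holds with Y = PL, P ≻ 0, ν₄ > 0, ν₁, ν₅, ν₆ ≥ 0, then for every e, Δf, Δh, w with ‖Δf‖ ≤ γ_f‖e‖ and ‖Δh‖ ≤ γ_l‖e‖, the inequality ėᵀPe + eᵀPė + ν₄ eᵀPe ≤ ν₄ν₁‖w‖² holds, where ė = (A - LC)e + Δf - LΔh + (B_w - LD_w)w. -/

import Mathlib

open Matrix


lemma dot_t {a b : Type*} [Fintype a] [Fintype b] (B : Matrix a b ℝ) (u : b → ℝ) (v : a → ℝ) :
    u ⬝ᵥ Bᵀ *ᵥ v = v ⬝ᵥ B *ᵥ u := by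
  rw [Matrix.dotProduct_mulVec, Matrix.vecMul_transpose, dotProduct_comm]

lemma dot_t' {a b : Type*} [Fintype a] [Fintype b] (B : Matrix a b ℝ) (u : b → ℝ) (v : a → ℝ) :
    B *ᵥ u ⬝ᵥ v = Bᵀ *ᵥ v ⬝ᵥ u := by
  rw [dotProduct_comm (B *ᵥ u) v, ← dot_t, dotProduct_comm u]


/-- If the block matrix inequality (13b) of Theorem 1 holds with `Y = PL`,
then for all `e, Δf, Δh, w` satisfying the Lipschitz bounds, the Lyapunov
decay inequality `edotᵀPe + eᵀPedot + ν₄ eᵀPe ≤ ν₄ν₁‖w‖²` holds. -/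
theorem lmi_implies_lyapunov_decay {n p m : ℕ}
    (A P : Matrix (Fin n) (Fin n) ℝ) (hP : P.PosDef)
    (L : Matrix (Fin n) (Fin p) ℝ) (C : Matrix (Fin p) (Fin n) ℝ)
    (Bw : Matrix (Fin n) (Fin m) ℝ) (Dw : Matrix (Fin p) (Fin m) ℝ)
    (γf γl ν₁ ν₄ ν₅ ν₆ : ℝ)
    (hγf : 0 ≤ γf) (hγl : 0 ≤ γl)
    (hν₁ : 0 ≤ ν₁) (hν₄ : 0 < ν₄) (hν₅ : 0 ≤ ν₅) (hν₆ : 0 ≤ ν₆)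
    (Y : Matrix (Fin n) (Fin p) ℝ) (hY : Y = P * L)
    (Q : Matrix (Fin n) (Fin n) ℝ)
    (hQ : Q = Aᵀ * P + P * A - Cᵀ * Yᵀ - Y * C + ν₄ • P)
    (M : Matrix ((Fin n ⊕ Fin n) ⊕ (Fin p ⊕ Fin m))
      ((Fin n ⊕ Fin n) ⊕ (Fin p ⊕ Fin m)) ℝ)
    (hM : M = Matrix.fromBlocks
      (Matrix.fromBlocks
        (Q + (ν₅ * γf ^ 2) • (1 : Matrix (Fin n) (Fin n) ℝ)
           + (ν₆ * γl ^ 2) • (1 : Matrix (Fin n) (Fin n) ℝ)) P P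
        (-(ν₅ • (1 : Matrix (Fin n) (Fin n) ℝ))))
      (Matrix.fromBlocks (-Y) (P * Bw - Y * Dw) 0 0)
      (Matrix.fromBlocks (-Yᵀ) 0 (Bwᵀ * P - Dwᵀ * Yᵀ) 0)
      (Matrix.fromBlocks (-(ν₆ • (1 : Matrix (Fin p) (Fin p) ℝ))) 0 0
        (-(ν₄ * ν₁) • (1 : Matrix (Fin m) (Fin m) ℝ))))
    (hLMI : (-M).PosSemidef) :
    ∀ (e Δf : Fin n → ℝ) (Δh : Fin p → ℝ) (w : Fin m → ℝ),
      Real.sqrt (Δf ⬝ᵥ Δf) ≤ γf * Real.sqrt (e ⬝ᵥ e) →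
      Real.sqrt (Δh ⬝ᵥ Δh) ≤ γl * Real.sqrt (e ⬝ᵥ e) →
      ∀ edot : Fin n → ℝ,
        edot = (A - L * C).mulVec e + Δf - L.mulVec Δh + (Bw - L * Dw).mulVec w →
        edot ⬝ᵥ P.mulVec e + e ⬝ᵥ P.mulVec edot + ν₄ * (e ⬝ᵥ P.mulVec e) ≤
          ν₄ * ν₁ * (w ⬝ᵥ w) := by
  intro e Δf Δh w hf hh edot hedot
  have hnn : ∀ {k : ℕ} (v : Fin k → ℝ), 0 ≤ v ⬝ᵥ v := fun v =>
    Finset.sum_nonneg fun i _ => mul_self_nonneg _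
  have hf2 : Δf ⬝ᵥ Δf ≤ γf ^ 2 * (e ⬝ᵥ e) := by
    have h1 := mul_self_le_mul_self (Real.sqrt_nonneg _) hf
    rw [Real.mul_self_sqrt (hnn Δf)] at h1
    calc Δf ⬝ᵥ Δf ≤ γf * Real.sqrt (e ⬝ᵥ e) * (γf * Real.sqrt (e ⬝ᵥ e)) := h1
      _ = γf ^ 2 * (Real.sqrt (e ⬝ᵥ e) * Real.sqrt (e ⬝ᵥ e)) := by ring
      _ = γf ^ 2 * (e ⬝ᵥ e) := by rw [Real.mul_self_sqrt (hnn e)]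
  have hh2 : Δh ⬝ᵥ Δh ≤ γl ^ 2 * (e ⬝ᵥ e) := by
    have h1 := mul_self_le_mul_self (Real.sqrt_nonneg _) hh
    rw [Real.mul_self_sqrt (hnn Δh)] at h1
    calc Δh ⬝ᵥ Δh ≤ γl * Real.sqrt (e ⬝ᵥ e) * (γl * Real.sqrt (e ⬝ᵥ e)) := h1
      _ = γl ^ 2 * (Real.sqrt (e ⬝ᵥ e) * Real.sqrt (e ⬝ᵥ e)) := by ring
      _ = γl ^ 2 * (e ⬝ᵥ e) := by rw [Real.mul_self_sqrt (hnn e)]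
  have hPs : Pᵀ = P := hP.isHermitian
  set z : ((Fin n ⊕ Fin n) ⊕ (Fin p ⊕ Fin m)) → ℝ :=
    Sum.elim (Sum.elim e Δf) (Sum.elim Δh w) with hz
  have hMz : z ⬝ᵥ M.mulVec z ≤ 0 := by
    have := hLMI.dotProduct_mulVec_nonneg z
    simp only [RCLike.star_def, star_trivial, Matrix.neg_mulVec, dotProduct_neg] at this
    linarith
  have key : edot ⬝ᵥ P.mulVec e + e ⬝ᵥ P.mulVec edot + ν₄ * (e ⬝ᵥ P.mulVec e)
      - ν₄ * ν₁ * (w ⬝ᵥ w)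
      = z ⬝ᵥ M.mulVec z + ν₅ * (Δf ⬝ᵥ Δf - γf ^ 2 * (e ⬝ᵥ e))
        + ν₆ * (Δh ⬝ᵥ Δh - γl ^ 2 * (e ⬝ᵥ e)) := by
    subst hedot hM hQ hY
    simp only [hz, Matrix.fromBlocks_mulVec, Sum.elim_comp_inl, Sum.elim_comp_inr, sumElim_dotProduct_sumElim,
      Matrix.add_mulVec, Matrix.sub_mulVec, Matrix.neg_mulVec, Matrix.smul_mulVec,
      Matrix.one_mulVec, Matrix.zero_mulVec, ← Matrix.mulVec_mulVec,
      Matrix.mulVec_add, Matrix.mulVec_sub, Matrix.mulVec_neg, Matrix.mulVec_smul,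
      dotProduct_add, add_dotProduct, dotProduct_sub, sub_dotProduct,
      dotProduct_neg, neg_dotProduct, dotProduct_smul, smul_dotProduct,
      smul_eq_mul, add_zero, zero_add, dotProduct_zero, zero_dotProduct,
      Matrix.transpose_mul, Matrix.transpose_transpose, hPs]
    simp only [dot_t]
    linear_combination (dotProduct_comm (A *ᵥ e) (P *ᵥ e))
      - dot_t' L (C *ᵥ e) (P *ᵥ e)
      - dotProduct_comm (L *ᵥ Δh) (P *ᵥ e)
      + dotProduct_comm (Bw *ᵥ w) (P *ᵥ e)
      - dot_t' L (Dw *ᵥ w) (P *ᵥ e)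
  nlinarith [hMz, mul_nonneg hν₅ (sub_nonneg.mpr hf2), mul_nonneg hν₆ (sub_nonneg.mpr hh2)]
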